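/- Let p, q, r, a, b, ν ∈ ℝ with a ≠ 0, p ≠ 0, A = 12·a·q/p and ν = (4·a⁴·q + b²·r)/a. Then U(ξ) = A·tanh(ξ) satisfies −ν·a·U''(ξ) + p·a³·U''(ξ)·U'(ξ) + q·a⁴·U''''(ξ) + r·b²·U''(ξ) = 0 for all ξ ∈ ℝ. -/

import Mathlib

lemma hasDerivAt_tanh' (x : ℝ) :
    HasDerivAt Real.tanh (1 - Real.tanh x ^ 2) x := by
  have hc : Real.cosh x ≠ 0 := (Real.cosh_pos x).ne'
  have h := (Real.hasDerivAt_sinh x).fun_div (Real.hasDerivAt_cosh x) hc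
  have heq : (fun y => Real.sinh y / Real.cosh y) = Real.tanh := by
    funext y; rw [Real.tanh_eq_sinh_div_cosh]
  rw [heq] at h
  refine h.congr_deriv ?_
  rw [Real.tanh_eq_sinh_div_cosh]
  have h1 : Real.cosh x ^ 2 - Real.sinh x ^ 2 = 1 := Real.cosh_sq_sub_sinh_sq x
  field_simp

theorem fpKP_tanh_solution (p q r a b ν : ℝ) (ha : a ≠ 0) (hp : p ≠ 0)
    (hν : ν = (4 * a^4 * q + b^2 * r) / a) :
    let A := 12 * a * q / p
    ∀ ξ : ℝ, -ν * a * iteratedDeriv 2 (fun s => A * Real.tanh s) ξ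
      + p * a^3 * iteratedDeriv 2 (fun s => A * Real.tanh s) ξ
          * deriv (fun s => A * Real.tanh s) ξ
      + q * a^4 * iteratedDeriv 4 (fun s => A * Real.tanh s) ξ
      + r * b^2 * iteratedDeriv 2 (fun s => A * Real.tanh s) ξ = 0 := by
  intro A ξ
  set T := Real.tanh with hT
  have h1 : ∀ x, HasDerivAt (fun s => A * T s) (A * (1 - T x ^ 2)) x := fun x =>
    (hasDerivAt_tanh' x).const_mul A
  have h2 : ∀ x, HasDerivAt (fun s => A * (1 - T s ^ 2))
      (A * (-2 * T x * (1 - T x ^ 2))) x := by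
    intro x
    have := (((hasDerivAt_tanh' x).fun_pow 2).const_sub 1).const_mul A
    refine this.congr_deriv ?_; push_cast; ring
  have h3 : ∀ x, HasDerivAt (fun s => A * (-2 * T s * (1 - T s ^ 2)))
      (A * (-2 * (1 - T x ^ 2) ^ 2 + 4 * T x ^ 2 * (1 - T x ^ 2))) x := by
    intro x
    have := ((((hasDerivAt_tanh' x).const_mul (-2)).mul
      (((hasDerivAt_tanh' x).fun_pow 2).const_sub 1)).const_mul A)
    refine this.congr_deriv ?_; push_cast; ring
  have h4 : ∀ x, HasDerivAt
      (fun s => A * (-2 * (1 - T s ^ 2) ^ 2 + 4 * T s ^ 2 * (1 - T s ^ 2)))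
      (A * (16 * T x * (1 - T x ^ 2) ^ 2 - 8 * T x ^ 3 * (1 - T x ^ 2))) x := by
    intro x
    have := (((((hasDerivAt_tanh' x).fun_pow 2).const_sub 1).fun_pow 2).const_mul (-2) |>.add
      ((((hasDerivAt_tanh' x).fun_pow 2).const_mul 4).mul
        (((hasDerivAt_tanh' x).fun_pow 2).const_sub 1))).const_mul A
    refine this.congr_deriv ?_; push_cast; ring
  have d1 : deriv (fun s => A * T s) = fun x => A * (1 - T x ^ 2) :=
    funext fun x => (h1 x).deriv
  have d2 : deriv (fun x => A * (1 - T x ^ 2))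
      = fun x => A * (-2 * T x * (1 - T x ^ 2)) := funext fun x => (h2 x).deriv
  have d3 : deriv (fun x => A * (-2 * T x * (1 - T x ^ 2)))
      = fun x => A * (-2 * (1 - T x ^ 2) ^ 2 + 4 * T x ^ 2 * (1 - T x ^ 2)) :=
    funext fun x => (h3 x).deriv
  have d4 : deriv (fun x => A * (-2 * (1 - T x ^ 2) ^ 2 + 4 * T x ^ 2 * (1 - T x ^ 2)))
      = fun x => A * (16 * T x * (1 - T x ^ 2) ^ 2 - 8 * T x ^ 3 * (1 - T x ^ 2)) :=
    funext fun x => (h4 x).deriv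
  have i2 : iteratedDeriv 2 (fun s => A * T s)
      = fun x => A * (-2 * T x * (1 - T x ^ 2)) := by
    rw [show (2:ℕ) = 1 + 1 from rfl, iteratedDeriv_succ, iteratedDeriv_one, d1, d2]
  have i4 : iteratedDeriv 4 (fun s => A * T s)
      = fun x => A * (16 * T x * (1 - T x ^ 2) ^ 2 - 8 * T x ^ 3 * (1 - T x ^ 2)) := by
    rw [show (4:ℕ) = 3 + 1 from rfl, iteratedDeriv_succ,
      show (3:ℕ) = 2 + 1 from rfl, iteratedDeriv_succ, i2, d3, d4]
  rw [i2, i4, d1]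
  have hA : A = 12 * a * q / p := rfl
  rw [hν, hA]
  field_simp
  ring
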